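/- There exist sets S, B ⊆ ℝ such that S has positive Lebesgue measure, B has Lebesgue measure zero, and for every x ∈ S there exists r > 0 with both x - r ∈ B and x + r ∈ B. -/

import Mathlib

open Set MeasureTheory Filter

set_option maxHeartbeats 1000000

/-- Midpoint set of `A`. -/
def midSet (A : Set ℝ) : Set ℝ :=
  {z | ∃ x ∈ A, ∃ y ∈ A, x ≠ y ∧ z = (x + y) / 2}

/-- `cantorStage n` is the `(n+1)`-st stage `C_{n+1}` of the middle-thirds Cantor
construction, so `cantorStage 0 = C₁ = [0,1/3] ∪ [2/3,1]`. -/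
def cantorStage : ℕ → Set ℝ
  | 0 => Icc 0 (1/3) ∪ Icc (2/3) 1
  | n + 1 => (fun x => x / 3) '' cantorStage n ∪ (fun x => 2/3 + x / 3) '' cantorStage n

/-- The middle-thirds Cantor set. -/
def cantorSet' : Set ℝ := ⋂ n, cantorStage n

/-- The set of reals of the form `∑ aₙ 3^{-(n+1)}` with digits `aₙ ∈ {0,1}`. -/
def B0 : Set ℝ :=
  {x | ∃ a : ℕ → ℝ, (∀ n, a n = 0 ∨ a n = 1) ∧ x = ∑' n, a n / 3 ^ (n + 1)}

lemma geom_hasSum (N : ℕ) :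
    HasSum (fun n : ℕ => (1 : ℝ) / 3 ^ (n + N + 1)) ((1 / 3) ^ N / 2) := by
  have h := (hasSum_geometric_of_lt_one (by norm_num : (0:ℝ) ≤ 1/3)
    (by norm_num : (1:ℝ)/3 < 1)).mul_left ((1/3) ^ (N + 1))
  have h2 : (1/3 : ℝ) ^ (N + 1) * (1 - 1/3)⁻¹ = (1/3) ^ N / 2 := by
    rw [pow_succ]; ring
  rw [h2] at h
  convert h using 2 with n
  case e'_3 => rfl
  simp only [one_div, div_pow, one_pow, inv_pow, ← mul_inv, ← pow_add]
  congr 2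
  omega

lemma summable_digits (a : ℕ → ℝ) (h0 : ∀ n, 0 ≤ a n) (h1 : ∀ n, a n ≤ 2) :
    Summable (fun n => a n / 3 ^ (n + 1)) := by
  have hg : Summable (fun n : ℕ => 2 * ((1 : ℝ) / 3 ^ (n + 0 + 1))) :=
    ((geom_hasSum 0).summable).mul_left 2
  refine Summable.of_nonneg_of_le (fun n => div_nonneg (h0 n) (by positivity))
    (fun n => ?_) hg
  simp only [Nat.add_zero, mul_one_div]
  exact div_le_div₀ (by norm_num) (h1 n) (by positivity) le_rfl

lemma digits01 {a : ℕ → ℝ} (h : ∀ n, a n = 0 ∨ a n = 1) :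
    Summable (fun n => a n / 3 ^ (n + 1)) :=
  summable_digits a (fun n => by rcases h n with h'|h' <;> simp [h'])
    (fun n => by rcases h n with h'|h' <;> rw [h'] <;> norm_num)

lemma tsum_digits_nonneg (a : ℕ → ℝ) (h0 : ∀ n, 0 ≤ a n) :
    0 ≤ ∑' n, a n / 3 ^ (n + 1) :=
  tsum_nonneg fun n => div_nonneg (h0 n) (by positivity)

lemma tsum_digits_le (a : ℕ → ℝ) (h : ∀ n, a n = 0 ∨ a n = 1) :
    ∑' n, a n / 3 ^ (n + 1) ≤ 1 / 2 := by
  have hg := (geom_hasSum 0).tsum_eq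
  calc ∑' n, a n / 3 ^ (n + 1) ≤ ∑' n, (1:ℝ) / 3 ^ (n + 0 + 1) := by
        apply Summable.tsum_le_tsum _ (digits01 h) (geom_hasSum 0).summable
        intro n
        apply div_le_div_of_nonneg_right ?_ (by positivity)
        · rcases h n with h'|h' <;> rw [h'] <;> norm_num
    _ = 1 / 2 := by simpa using hg

/-- `B0` is a Lebesgue null set. -/
lemma volume_B0 : volume B0 = 0 := by
  classical
  have key : ∀ N : ℕ, volume B0 ≤ ENNReal.ofReal ((2/3 : ℝ) ^ N / 2) := by
    intro N
    set c : (Fin N → Bool) → ℝ :=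
      fun s => ∑ i : Fin N, (if s i then (1:ℝ) else 0) / 3 ^ ((i : ℕ) + 1) with hc
    have cover : B0 ⊆ ⋃ s : Fin N → Bool, Icc (c s) (c s + (1/3 : ℝ) ^ N / 2) := by
      rintro x ⟨a, ha, rfl⟩
      have hs := digits01 ha
      refine mem_iUnion.2 ⟨fun i => if a (i : ℕ) = 1 then true else false, ?_⟩
      have hsplit := (Summable.sum_add_tsum_nat_add N hs).symm
      have hcs : ∑ i ∈ Finset.range N, a i / 3 ^ (i + 1)
          = c (fun i => if a (i : ℕ) = 1 then true else false) := by
        rw [hc, ← Fin.sum_univ_eq_sum_range (fun i => a i / 3 ^ (i + 1)) N]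
        apply Finset.sum_congr rfl
        intro i _
        by_cases h : a (i : ℕ) = 1 <;> rcases ha (i : ℕ) with h'|h' <;> simp_all
      have htail0 : 0 ≤ ∑' i, a (i + N) / 3 ^ (i + N + 1) :=
        tsum_nonneg fun i => div_nonneg
          (by rcases ha (i + N) with h'|h' <;> simp [h']) (by positivity)
      have htail1 : ∑' i, a (i + N) / 3 ^ (i + N + 1) ≤ (1/3 : ℝ) ^ N / 2 := by
        rw [← (geom_hasSum N).tsum_eq]
        refine Summable.tsum_le_tsum (fun i => ?_) ((summable_nat_add_iff N).2 hs)
          (geom_hasSum N).summable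
        refine div_le_div_of_nonneg_right ?_ (by positivity)
        rcases ha (i + N) with h'|h' <;> rw [h'] <;> norm_num
      constructor
      · rw [hsplit, hcs]
        linarith
      · rw [hsplit, hcs]
        linarith
    calc volume B0 ≤ volume (⋃ s : Fin N → Bool, Icc (c s) (c s + (1/3 : ℝ) ^ N / 2)) :=
          measure_mono cover
      _ ≤ ∑ s : Fin N → Bool, volume (Icc (c s) (c s + (1/3 : ℝ) ^ N / 2)) :=
          measure_iUnion_fintype_le _ _
      _ = (Fintype.card (Fin N → Bool)) • ENNReal.ofReal ((1/3 : ℝ) ^ N / 2) := by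
          simp [Real.volume_Icc]
      _ = ENNReal.ofReal ((2/3 : ℝ) ^ N / 2) := by
          rw [Fintype.card_fun, Fintype.card_fin, Fintype.card_bool, nsmul_eq_mul]
          rw [← ENNReal.ofReal_natCast, ← ENNReal.ofReal_mul (by positivity)]
          congr 1
          push_cast
          rw [div_pow, div_pow, one_pow]
          ring
  have htend : Tendsto (fun N : ℕ => ENNReal.ofReal ((2/3 : ℝ) ^ N / 2)) atTop (nhds 0) := by
    have : Tendsto (fun N : ℕ => ((2/3 : ℝ) ^ N / 2)) atTop (nhds 0) := by
      simpa using (tendsto_pow_atTop_nhds_zero_of_lt_one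
        (by norm_num : (0:ℝ) ≤ 2/3) (by norm_num : (2/3:ℝ) < 1)).div_const 2
    simpa using ENNReal.tendsto_ofReal this
  exact le_antisymm (ge_of_tendsto' htend key) zero_le

/-- `n`-th ternary digit of `y`. -/
noncomputable def dig (y : ℝ) (n : ℕ) : ℤ := ⌊y * 3 ^ (n + 1)⌋ - 3 * ⌊y * 3 ^ n⌋

lemma dig_nonneg (y : ℝ) (n : ℕ) : 0 ≤ dig y n := by
  have h : (3:ℤ) * ⌊y * 3 ^ n⌋ ≤ ⌊y * 3 ^ (n + 1)⌋ := by
    apply Int.le_floor.2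
    push_cast
    calc ((3:ℝ)) * ⌊y * 3 ^ n⌋ ≤ 3 * (y * 3 ^ n) := by
          have := Int.floor_le (y * 3 ^ n); nlinarith
      _ = y * 3 ^ (n + 1) := by ring
  simp only [dig]
  omega

lemma dig_le_two (y : ℝ) (n : ℕ) : dig y n ≤ 2 := by
  have h : ⌊y * 3 ^ (n + 1)⌋ < 3 * ⌊y * 3 ^ n⌋ + 3 := by
    have h1 : y * 3 ^ n < ⌊y * 3 ^ n⌋ + 1 := Int.lt_floor_add_one _
    have h2 : y * 3 ^ (n + 1) < 3 * ⌊y * 3 ^ n⌋ + 3 := by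
      have e : y * 3 ^ (n+1) = 3 * (y * 3 ^ n) := by ring
      rw [e]; push_cast; nlinarith
    exact_mod_cast Int.floor_lt.2 (by push_cast; push_cast at h2; linarith)
  simp only [dig]
  omega

lemma dig_partial (y : ℝ) (N : ℕ) :
    ∑ n ∈ Finset.range N, (dig y n : ℝ) / 3 ^ (n + 1) = (⌊y * 3 ^ N⌋ : ℝ) / 3 ^ N - ⌊y⌋ := by
  have h := Finset.sum_range_sub (f := fun k => (⌊y * 3 ^ k⌋ : ℝ) / 3 ^ k) N
  have e : (⌊y * 3 ^ N⌋ : ℝ) / 3 ^ N - ⌊y⌋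
      = (fun k => (⌊y * 3 ^ k⌋ : ℝ) / 3 ^ k) N - (fun k => (⌊y * 3 ^ k⌋ : ℝ) / 3 ^ k) 0 := by
    simp
  rw [e, ← h]
  apply Finset.sum_congr rfl
  intro n _
  simp only [dig]
  push_cast
  field_simp
  ring

lemma dig_hasSum (y : ℝ) (hy0 : 0 ≤ y) (hy1 : y < 1) :
    HasSum (fun n => (dig y n : ℝ) / 3 ^ (n + 1)) y := by
  have hnn : ∀ n, 0 ≤ (dig y n : ℝ) / 3 ^ (n + 1) := fun n =>
    div_nonneg (by exact_mod_cast dig_nonneg y n) (by positivity)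
  rw [hasSum_iff_tendsto_nat_of_nonneg hnn]
  have hfl : ⌊y⌋ = 0 := Int.floor_eq_zero_iff.2 ⟨hy0, by simpa using hy1⟩
  simp only [dig_partial, hfl, Int.cast_zero, sub_zero]
  have hg : Tendsto (fun N : ℕ => y - (1/3 : ℝ) ^ N) atTop (nhds y) := by
    simpa using tendsto_const_nhds.sub (tendsto_pow_atTop_nhds_zero_of_lt_one
      (by norm_num : (0:ℝ) ≤ 1/3) (by norm_num : (1/3:ℝ) < 1))
  apply tendsto_of_tendsto_of_tendsto_of_le_of_le hg tendsto_const_nhds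
  · intro N
    have h1 := Int.lt_floor_add_one (y * 3 ^ N)
    have h3 : (0:ℝ) < 3 ^ N := by positivity
    rw [le_div_iff₀ h3]
    have hp : (1/3:ℝ) ^ N * 3 ^ N = 1 := by
      rw [← mul_pow]; norm_num
    nlinarith
  · intro N
    have h3 : (0:ℝ) < 3 ^ N := by positivity
    rw [div_le_iff₀ h3]
    exact Int.floor_le _

/-- Every `y ∈ [0,1)` is the sum of two elements of `B0`. -/
lemma split_mem_B0 (y : ℝ) (hy0 : 0 ≤ y) (hy1 : y < 1) :
    ∃ a ∈ B0, ∃ b ∈ B0, a + b = y := by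
  set A : ℕ → ℝ := fun n => min ((dig y n : ℝ)) 1 with hA
  set Bd : ℕ → ℝ := fun n => (dig y n : ℝ) - A n with hB
  have hdig : ∀ n, dig y n = 0 ∨ dig y n = 1 ∨ dig y n = 2 := by
    intro n
    have := dig_nonneg y n
    have := dig_le_two y n
    omega
  have hA01 : ∀ n, A n = 0 ∨ A n = 1 := by
    intro n; rcases hdig n with h|h|h <;> simp [hA, h] <;> norm_num
  have hB01 : ∀ n, Bd n = 0 ∨ Bd n = 1 := by
    intro n; rcases hdig n with h|h|h <;> simp [hB, hA, h] <;> norm_num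
  refine ⟨∑' n, A n / 3 ^ (n + 1), ⟨A, hA01, rfl⟩, ∑' n, Bd n / 3 ^ (n + 1), ⟨Bd, hB01, rfl⟩, ?_⟩
  rw [← Summable.tsum_add (digits01 hA01) (digits01 hB01), ← (dig_hasSum y hy0 hy1).tsum_eq]
  congr 1 with n
  rw [← add_div]
  congr 1
  simp [hB]

theorem stmt_6 :
    ∃ S B : Set ℝ, 0 < volume S ∧ volume B = 0 ∧
      ∀ x ∈ S, ∃ r > (0:ℝ), x - r ∈ B ∧ x + r ∈ B := by
  refine ⟨Ioo 0 (1/2), ((· + (-1)) '' B0) ∪ ((· + 1) '' B0), ?_, ?_, ?_⟩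
  · simp [Real.volume_Ioo]
  · apply le_antisymm _ zero_le
    apply le_trans (measure_union_le _ _)
    have h1 : ∀ c : ℝ, volume ((· + c) '' B0) = 0 := by
      intro c
      rw [Set.image_add_right, measure_preimage_add_right]
      exact volume_B0
    rw [h1, h1, add_zero]
  · rintro x ⟨hx0, hx1⟩
    obtain ⟨a, ha, b, hb, hab⟩ := split_mem_B0 (2 * x) (by linarith) (by linarith)
    have ha0 : 0 ≤ a := by
      obtain ⟨s, hs, ha'⟩ := ha
      rw [ha']
      exact tsum_digits_nonneg s (fun n => by rcases hs n with h|h <;> simp [h])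
    have hb2 : b ≤ 1/2 := by
      obtain ⟨s, hs, hb'⟩ := hb
      rw [hb']
      exact tsum_digits_le s hs
    refine ⟨(a - b) / 2 + 1, by linarith, ?_, ?_⟩
    · left
      exact ⟨b, hb, by linarith⟩
    · right
      exact ⟨a, ha, by linarith⟩
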